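/- Let α and β be finite nonempty index types and let ρ : Matrix (α × β) (α × β) ℂ be positive semidefinite. Then the partial transpose ρ^{T_B} satisfies −(trace(ρ).re/2)·1 ⪯ ρ^{T_B} ⪯ trace(ρ).re·1 in the Loewner order; that is, both matrices trace(ρ).re·1 − ρ^{T_B} and ρ^{T_B} + (trace(ρ).re/2)·1 are positive semidefinite. -/

import Mathlib

open Matrix BigOperators ComplexOrder

/-- Partial transpose on the second tensor factor. -/
def ptB {α β : Type*} (M : Matrix (α × β) (α × β) ℂ) : Matrix (α × β) (α × β) ℂ :=
  fun p q => M (p.1, q.2) (q.1, p.2)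

section Aux

variable {α β : Type*} [Fintype α] [Fintype β]

private lemma csub (u v : ℂ) : ‖u - v‖^2 = ‖u‖^2 + ‖v‖^2 - 2*(u * (starRingEnd ℂ) v).re := by
  simp only [Complex.sq_norm, Complex.normSq_apply,
    Complex.mul_re, Complex.sub_re, Complex.sub_im, Complex.conj_re, Complex.conj_im]
  ring

-- S = T - D/2
private lemma core_eq (N : β → β → ℂ) :
    (∑ b, ∑ d, N b d * (starRingEnd ℂ) (N d b)).re
      = (∑ b, ∑ d, ‖N b d‖^2) - (∑ b, ∑ d, ‖N b d - N d b‖^2)/2 := by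
  have h1 : ∀ b d, (N b d * (starRingEnd ℂ) (N d b)).re
      = ‖N b d‖^2/2 + ‖N d b‖^2/2 - ‖N b d - N d b‖^2/2 := by
    intro b d; rw [csub]; ring
  simp only [Complex.re_sum]
  rw [show (∑ b, ∑ d, (N b d * (starRingEnd ℂ) (N d b)).re)
      = ∑ b, ∑ d, (‖N b d‖^2/2 + ‖N d b‖^2/2 - ‖N b d - N d b‖^2/2) from by
    exact Finset.sum_congr rfl fun b _ => Finset.sum_congr rfl fun d _ => h1 b d]
  have h2 : (∑ b, ∑ d, ‖N d b‖^2) = ∑ b, ∑ d, ‖N b d‖^2 := Finset.sum_comm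
  simp only [Finset.sum_sub_distrib, Finset.sum_add_distrib, ← Finset.sum_div]
  rw [h2]; ring

private lemma core_D_le (N : β → β → ℂ) :
    (∑ b, ∑ d, ‖N b d - N d b‖^2) ≤ 4 * ∑ b, ∑ d, ‖N b d‖^2 := by
  have h1 : ∀ b d, ‖N b d - N d b‖^2 ≤ 2*‖N b d‖^2 + 2*‖N d b‖^2 := by
    intro b d
    have := norm_sub_le (N b d) (N d b)
    nlinarith [norm_nonneg (N b d), norm_nonneg (N d b), sq_nonneg (‖N b d‖ - ‖N d b‖),
      norm_nonneg (N b d - N d b)]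
  calc (∑ b, ∑ d, ‖N b d - N d b‖^2) ≤ ∑ b, ∑ d, (2*‖N b d‖^2 + 2*‖N d b‖^2) :=
        Finset.sum_le_sum fun b _ => Finset.sum_le_sum fun d _ => h1 b d
    _ = 4 * ∑ b, ∑ d, ‖N b d‖^2 := by
        simp only [Finset.sum_add_distrib, ← Finset.mul_sum]
        rw [show (∑ b, ∑ d, ‖N d b‖^2) = ∑ b, ∑ d, ‖N b d‖^2 from Finset.sum_comm]
        ring

-- single wedge bound
private lemma wedge (y z : β → ℂ) :
    ∑ b, ∑ d, ‖y b * z d - y d * z b‖^2 ≤ 2 * (∑ b, ‖y b‖^2) * (∑ b, ‖z b‖^2) := by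
  have hexp : ∑ b, ∑ d, ‖y b * z d - y d * z b‖^2
      = 2 * (∑ b, ‖y b‖^2) * (∑ b, ‖z b‖^2)
        - 2 * ((∑ b, y b * (starRingEnd ℂ) (z b)) *
            (∑ d, z d * (starRingEnd ℂ) (y d))).re := by
    have h1 : ∀ b d : β, ‖y b * z d - y d * z b‖^2
        = ‖y b‖^2 * ‖z d‖^2 + ‖y d‖^2 * ‖z b‖^2
          - 2*((y b * (starRingEnd ℂ) (z b)) * (z d * (starRingEnd ℂ) (y d))).re := by
      intro b d
      rw [csub]
      simp only [norm_mul, _root_.map_mul]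
      rw [show y b * z d * ((starRingEnd ℂ) (y d) * (starRingEnd ℂ) (z b))
          = y b * (starRingEnd ℂ) (z b) * (z d * (starRingEnd ℂ) (y d)) from by ring]
      ring
    simp only [h1, Finset.sum_sub_distrib, Finset.sum_add_distrib]
    have h2 : (∑ b, ∑ d, ‖y b‖^2 * ‖z d‖^2) = (∑ b, ‖y b‖^2) * (∑ b, ‖z b‖^2) :=
      (Finset.sum_mul_sum _ _ _ _).symm
    have h3 : (∑ b, ∑ d, ‖y d‖^2 * ‖z b‖^2) = (∑ b, ‖y b‖^2) * (∑ b, ‖z b‖^2) := by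
      rw [Finset.sum_comm]
      exact (Finset.sum_mul_sum _ _ _ _).symm
    have h4 : (∑ b, ∑ d, 2*((y b * (starRingEnd ℂ) (z b)) * (z d * (starRingEnd ℂ) (y d))).re)
        = 2 * ((∑ b, y b * (starRingEnd ℂ) (z b)) * (∑ d, z d * (starRingEnd ℂ) (y d))).re := by
      rw [Finset.sum_mul_sum, Complex.re_sum]
      simp only [Complex.re_sum, Finset.mul_sum]
    rw [h2, h3, h4]
    ring
  rw [hexp]
  have : (∑ d, z d * (starRingEnd ℂ) (y d))
      = (starRingEnd ℂ) (∑ b, y b * (starRingEnd ℂ) (z b)) := by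
    rw [map_sum]; congr 1; ext b; simp [mul_comm]
  rw [this, Complex.mul_conj]
  simp [Complex.normSq_nonneg]

private lemma anti_sum (y z : α → β → ℂ) :
    ∑ b, ∑ d, ‖(∑ a, y a b * z a d) - (∑ a, y a d * z a b)‖^2
      ≤ 2 * (∑ a, ∑ b, ‖y a b‖^2) * (∑ a, ∑ b, ‖z a b‖^2) := by
  classical
  set W : α → EuclideanSpace ℂ (β × β) :=
    fun a => WithLp.toLp 2 (fun p => y a p.1 * z a p.2 - y a p.2 * z a p.1 : β × β → ℂ) with hWdef
  have hY : ∀ a, (0:ℝ) ≤ ∑ b, ‖y a b‖^2 := fun a => Finset.sum_nonneg fun _ _ => sq_nonneg _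
  have hZ : ∀ a, (0:ℝ) ≤ ∑ b, ‖z a b‖^2 := fun a => Finset.sum_nonneg fun _ _ => sq_nonneg _
  have hWa : ∀ a, ‖W a‖
      ≤ Real.sqrt 2 * (Real.sqrt (∑ b, ‖y a b‖^2) * Real.sqrt (∑ b, ‖z a b‖^2)) := by
    intro a
    rw [EuclideanSpace.norm_eq, ← Real.sqrt_mul (hY a), ← Real.sqrt_mul (by norm_num : (0:ℝ) ≤ 2)]
    apply Real.sqrt_le_sqrt
    rw [Fintype.sum_prod_type]
    have := wedge (y a) (z a)
    calc (∑ b, ∑ d, ‖W a (b, d)‖^2) = ∑ b, ∑ d, ‖y a b * z a d - y a d * z a b‖^2 := rfl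
      _ ≤ 2 * (∑ b, ‖y a b‖^2) * (∑ b, ‖z a b‖^2) := this
      _ = 2 * ((∑ b, ‖y a b‖^2) * (∑ b, ‖z a b‖^2)) := by ring
  have htri : ‖∑ a, W a‖ ≤ ∑ a, ‖W a‖ := norm_sum_le _ _
  have hlhs : (∑ b, ∑ d, ‖(∑ a, y a b * z a d) - (∑ a, y a d * z a b)‖^2)
      = ‖∑ a, W a‖^2 := by
    rw [EuclideanSpace.norm_eq, Real.sq_sqrt (Finset.sum_nonneg fun _ _ => sq_nonneg _),
      Fintype.sum_prod_type]
    congr 1; ext b; congr 1; ext d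
    congr 1
    show _ = ‖(∑ a, W a) (b, d)‖
    rw [WithLp.ofLp_sum, Finset.sum_apply]
    simp only [hWdef, Finset.sum_sub_distrib]
  rw [hlhs]
  have hWnn : (0:ℝ) ≤ ∑ a, ‖W a‖ := Finset.sum_nonneg fun a _ => norm_nonneg _
  have h1 : ‖∑ a, W a‖^2 ≤ (∑ a, ‖W a‖)^2 := pow_le_pow_left₀ (norm_nonneg _) htri 2
  refine h1.trans ?_
  have h2 : (∑ a, ‖W a‖)
      ≤ Real.sqrt 2 * ∑ a, Real.sqrt (∑ b, ‖y a b‖^2) * Real.sqrt (∑ b, ‖z a b‖^2) := by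
    rw [Finset.mul_sum]
    exact Finset.sum_le_sum fun a _ => hWa a
  have hs2 : (0:ℝ) ≤ ∑ a, Real.sqrt (∑ b, ‖y a b‖^2) * Real.sqrt (∑ b, ‖z a b‖^2) :=
    Finset.sum_nonneg fun a _ => mul_nonneg (Real.sqrt_nonneg _) (Real.sqrt_nonneg _)
  have h3 : (∑ a, ‖W a‖)^2
      ≤ 2 * (∑ a, Real.sqrt (∑ b, ‖y a b‖^2) * Real.sqrt (∑ b, ‖z a b‖^2))^2 := by
    have := pow_le_pow_left₀ hWnn h2 2
    calc (∑ a, ‖W a‖)^2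
        ≤ (Real.sqrt 2 * ∑ a, Real.sqrt (∑ b, ‖y a b‖^2) * Real.sqrt (∑ b, ‖z a b‖^2))^2 := this
      _ = 2 * (∑ a, Real.sqrt (∑ b, ‖y a b‖^2) * Real.sqrt (∑ b, ‖z a b‖^2))^2 := by
          rw [mul_pow, Real.sq_sqrt (by norm_num : (0:ℝ) ≤ 2)]
  refine h3.trans ?_
  have hcs := Finset.sum_mul_sq_le_sq_mul_sq Finset.univ
    (fun a => Real.sqrt (∑ b, ‖y a b‖^2)) (fun a => Real.sqrt (∑ b, ‖z a b‖^2))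
  simp only [Real.sq_sqrt (hY _), Real.sq_sqrt (hZ _)] at hcs
  calc 2 * (∑ a, Real.sqrt (∑ b, ‖y a b‖^2) * Real.sqrt (∑ b, ‖z a b‖^2))^2
      ≤ 2 * ((∑ a, ∑ b, ‖y a b‖^2) * (∑ a, ∑ b, ‖z a b‖^2)) := by linarith
    _ = 2 * (∑ a, ∑ b, ‖y a b‖^2) * (∑ a, ∑ b, ‖z a b‖^2) := by ring

private lemma T_le (y z : α → β → ℂ) :
    ∑ b, ∑ d, ‖∑ a, y a b * z a d‖^2
      ≤ (∑ a, ∑ b, ‖y a b‖^2) * (∑ a, ∑ b, ‖z a b‖^2) := by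
  have hpt : ∀ b d, ‖∑ a, y a b * z a d‖^2 ≤ (∑ a, ‖y a b‖^2) * (∑ a, ‖z a d‖^2) := by
    intro b d
    have h1 : ‖∑ a, y a b * z a d‖ ≤ ∑ a, ‖y a b‖ * ‖z a d‖ := by
      refine (norm_sum_le _ _).trans ?_
      exact le_of_eq (Finset.sum_congr rfl fun a _ => norm_mul _ _)
    have h2 := Real.sum_mul_le_sqrt_mul_sqrt Finset.univ
      (fun a => ‖y a b‖) (fun a => ‖z a d‖)
    have h3 : ‖∑ a, y a b * z a d‖
        ≤ Real.sqrt (∑ a, ‖y a b‖^2) * Real.sqrt (∑ a, ‖z a d‖^2) := h1.trans h2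
    have h4 := mul_self_le_mul_self (norm_nonneg _) h3
    calc ‖∑ a, y a b * z a d‖^2
        = ‖∑ a, y a b * z a d‖ * ‖∑ a, y a b * z a d‖ := sq _
      _ ≤ (Real.sqrt (∑ a, ‖y a b‖^2) * Real.sqrt (∑ a, ‖z a d‖^2))
            * (Real.sqrt (∑ a, ‖y a b‖^2) * Real.sqrt (∑ a, ‖z a d‖^2)) := h4
      _ = (∑ a, ‖y a b‖^2) * (∑ a, ‖z a d‖^2) := by
          rw [show ∀ p q : ℝ, p * q * (p * q) = p * p * (q * q) from fun p q => by ring,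
            Real.mul_self_sqrt (Finset.sum_nonneg fun _ _ => sq_nonneg _),
            Real.mul_self_sqrt (Finset.sum_nonneg fun _ _ => sq_nonneg _)]
  calc ∑ b, ∑ d, ‖∑ a, y a b * z a d‖^2
      ≤ ∑ b, ∑ d, (∑ a, ‖y a b‖^2) * (∑ a, ‖z a d‖^2) :=
        Finset.sum_le_sum fun b _ => Finset.sum_le_sum fun d _ => hpt b d
    _ = (∑ b, ∑ a, ‖y a b‖^2) * (∑ d, ∑ a, ‖z a d‖^2) := (Finset.sum_mul_sum _ _ _ _).symm
    _ = (∑ a, ∑ b, ‖y a b‖^2) * (∑ a, ∑ b, ‖z a b‖^2) := by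
        rw [show (∑ b, ∑ a, ‖y a b‖^2) = ∑ a, ∑ b, ‖y a b‖^2 from Finset.sum_comm,
          show (∑ d, ∑ a, ‖z a d‖^2) = ∑ a, ∑ b, ‖z a b‖^2 from Finset.sum_comm]

/-- Combined bounds for the "pure" quadratic form. -/
private lemma pure_bounds (y z : α → β → ℂ) :
    ((∑ b, ∑ d, (∑ a, y a b * z a d) * (starRingEnd ℂ) (∑ a, y a d * z a b)).im = 0)
    ∧ (-(((∑ a, ∑ b, ‖y a b‖^2) * (∑ a, ∑ b, ‖z a b‖^2))/2)
        ≤ (∑ b, ∑ d, (∑ a, y a b * z a d) * (starRingEnd ℂ) (∑ a, y a d * z a b)).re)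
    ∧ ((∑ b, ∑ d, (∑ a, y a b * z a d) * (starRingEnd ℂ) (∑ a, y a d * z a b)).re
        ≤ (∑ a, ∑ b, ‖y a b‖^2) * (∑ a, ∑ b, ‖z a b‖^2)) := by
  set N : β → β → ℂ := fun b d => ∑ a, y a b * z a d with hN
  have him : (∑ b, ∑ d, N b d * (starRingEnd ℂ) (N d b)).im = 0 := by
    have hconj : (starRingEnd ℂ) (∑ b, ∑ d, N b d * (starRingEnd ℂ) (N d b))
        = ∑ b, ∑ d, N b d * (starRingEnd ℂ) (N d b) := by
      simp only [map_sum, _root_.map_mul, Complex.conj_conj]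
      rw [Finset.sum_comm]
      exact Finset.sum_congr rfl fun b _ => Finset.sum_congr rfl fun d _ => mul_comm _ _
    have := Complex.conj_eq_iff_im.mp hconj
    exact this
  have hre := core_eq N
  have hT := T_le y z
  have hD := anti_sum y z
  have hD4 := core_D_le N
  have hDnn : (0:ℝ) ≤ ∑ b, ∑ d, ‖N b d - N d b‖^2 :=
    Finset.sum_nonneg fun _ _ => Finset.sum_nonneg fun _ _ => sq_nonneg _
  refine ⟨him, ?_, ?_⟩
  · rw [hre]
    have : (∑ b, ∑ d, ‖N b d - N d b‖^2)
        ≤ 2 * (∑ a, ∑ b, ‖y a b‖^2) * (∑ a, ∑ b, ‖z a b‖^2) := hD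
    linarith
  · rw [hre]
    linarith

private lemma reorder4 {γ : Type*} [Fintype γ] (f : α → β → γ → β → ℂ) :
    ∑ b, ∑ d, ∑ a, ∑ c, f a b c d = ∑ a, ∑ b, ∑ c, ∑ d, f a b c d :=
  calc ∑ b, ∑ d, ∑ a, ∑ c, f a b c d
      = ∑ b, ∑ a, ∑ d, ∑ c, f a b c d := Finset.sum_congr rfl fun _ _ => Finset.sum_comm
    _ = ∑ a, ∑ b, ∑ d, ∑ c, f a b c d := Finset.sum_comm
    _ = ∑ a, ∑ b, ∑ c, ∑ d, f a b c d :=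
        Finset.sum_congr rfl fun _ _ => Finset.sum_congr rfl fun _ _ => Finset.sum_comm

private lemma quad_eq (x : α × β → ℂ) (B : Matrix (α × β) (α × β) ℂ) :
    star x ⬝ᵥ ((ptB (Bᴴ * B)) *ᵥ x)
      = ∑ k, ∑ b, ∑ d,
          (∑ a, (starRingEnd ℂ) (x (a,b)) * (starRingEnd ℂ) (B k (a,d)))
          * (starRingEnd ℂ) (∑ c, (starRingEnd ℂ) (x (c,d)) * (starRingEnd ℂ) (B k (c,b))) := by
  have lhs_eq : star x ⬝ᵥ ((ptB (Bᴴ * B)) *ᵥ x)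
      = ∑ p : α × β, ∑ q : α × β, ∑ k : α × β,
          (starRingEnd ℂ) (x p) * ((starRingEnd ℂ) (B k (p.1, q.2)) * B k (q.1, p.2) * x q) := by
    simp only [dotProduct, mulVec, ptB, Matrix.mul_apply, conjTranspose_apply,
      Pi.star_apply, RCLike.star_def, Finset.mul_sum, Finset.sum_mul]
  rw [lhs_eq]
  rw [show (∑ p : α × β, ∑ q : α × β, ∑ k : α × β,
        (starRingEnd ℂ) (x p) * ((starRingEnd ℂ) (B k (p.1, q.2)) * B k (q.1, p.2) * x q))
      = ∑ k : α × β, ∑ p : α × β, ∑ q : α × β,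
        (starRingEnd ℂ) (x p) * ((starRingEnd ℂ) (B k (p.1, q.2)) * B k (q.1, p.2) * x q) from by
    rw [show (∑ p : α × β, ∑ q : α × β, ∑ k : α × β,
        (starRingEnd ℂ) (x p) * ((starRingEnd ℂ) (B k (p.1, q.2)) * B k (q.1, p.2) * x q))
        = ∑ p : α × β, ∑ k : α × β, ∑ q : α × β,
        (starRingEnd ℂ) (x p) * ((starRingEnd ℂ) (B k (p.1, q.2)) * B k (q.1, p.2) * x q) from
      Finset.sum_congr rfl fun p _ => Finset.sum_comm]
    exact Finset.sum_comm]
  refine Finset.sum_congr rfl fun k _ => ?_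
  rw [Fintype.sum_prod_type]
  simp only [map_sum, _root_.map_mul, Complex.conj_conj, Finset.sum_mul]
  simp only [Finset.mul_sum]
  rw [reorder4 (fun a b c d => (starRingEnd ℂ) (x (a, b)) * (starRingEnd ℂ) (B k (a, d))
      * (x (c, d) * B k (c, b)))]
  refine Finset.sum_congr rfl fun a _ => Finset.sum_congr rfl fun b _ => ?_
  rw [Fintype.sum_prod_type]
  refine Finset.sum_congr rfl fun c _ => Finset.sum_congr rfl fun d _ => ?_
  ring

private lemma trace_re (B : Matrix (α × β) (α × β) ℂ) :
    ((Bᴴ * B).trace).re = ∑ k, ∑ a, ∑ d, ‖B k (a,d)‖^2 := by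
  have : (Bᴴ * B).trace = ∑ p : α × β, ∑ k : α × β, (starRingEnd ℂ) (B k p) * B k p := by
    simp only [Matrix.trace, Matrix.diag, Matrix.mul_apply, conjTranspose_apply,
      RCLike.star_def]
  rw [this, Complex.re_sum]
  simp only [Complex.re_sum]
  rw [Finset.sum_comm]
  refine Finset.sum_congr rfl fun k _ => ?_
  rw [Fintype.sum_prod_type]
  refine Finset.sum_congr rfl fun a _ => Finset.sum_congr rfl fun d _ => ?_
  rw [mul_comm, Complex.mul_conj]
  simp [Complex.sq_norm]

end Aux

theorem stmt3 {α β : Type*} [Fintype α] [Fintype β] [DecidableEq α] [DecidableEq β]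
    [Nonempty α] [Nonempty β]
    (ρ : Matrix (α × β) (α × β) ℂ) (hρ : ρ.PosSemidef) :
    (((ρ.trace.re : ℝ) : ℂ) • 1 - ptB ρ).PosSemidef ∧
    (ptB ρ + ((ρ.trace.re / 2 : ℝ) : ℂ) • 1).PosSemidef := by
  classical
  obtain ⟨B, rfl⟩ : ∃ B : Matrix (α × β) (α × β) ℂ, ρ = Bᴴ * B := by
    open scoped MatrixOrder in exact CStarAlgebra.nonneg_iff_eq_star_mul_self.mp hρ.nonneg
  set ρ := Bᴴ * B with hρdef
  set R : ℝ := ρ.trace.re with hR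
  -- Hermitian facts
  have hptB : (ptB ρ).IsHermitian := by
    have hherm := hρ.1
    ext p q
    have h1 : ρᴴ (p.1, q.2) (q.1, p.2) = ρ (p.1, q.2) (q.1, p.2) := by rw [hherm]
    simp only [conjTranspose_apply] at h1 ⊢
    show star (ptB ρ q p) = ptB ρ p q
    show star (ρ (q.1, p.2) (p.1, q.2)) = ρ (p.1, q.2) (q.1, p.2)
    exact h1
  have hsmul : ∀ r : ℝ, (((r:ℂ)) • (1 : Matrix (α × β) (α × β) ℂ)).IsHermitian := by
    intro r
    unfold Matrix.IsHermitian
    rw [conjTranspose_smul, conjTranspose_one]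
    congr 1
    simp [Complex.star_def, Complex.conj_ofReal]
  -- quadratic form bounds
  have key : ∀ x : α × β → ℂ,
      (star x ⬝ᵥ ((ptB ρ) *ᵥ x)).im = 0 ∧
      -(( ∑ p : α × β, ‖x p‖^2) * R / 2) ≤ (star x ⬝ᵥ ((ptB ρ) *ᵥ x)).re ∧
      (star x ⬝ᵥ ((ptB ρ) *ᵥ x)).re ≤ (∑ p : α × β, ‖x p‖^2) * R := by
    intro x
    rw [hρdef, quad_eq x B]
    have hpb := fun k : α × β => pure_bounds (α := α) (β := β)
      (fun a b => (starRingEnd ℂ) (x (a,b))) (fun a d => (starRingEnd ℂ) (B k (a,d)))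
    simp only [RCLike.norm_conj] at hpb
    set X : ℝ := ∑ a : α, ∑ b : β, ‖x (a,b)‖^2 with hX
    have hXtot : (∑ p : α × β, ‖x p‖^2) = X := by
      rw [hX, Fintype.sum_prod_type]
    have hRsum : R = ∑ k : α × β, ∑ a : α, ∑ d : β, ‖B k (a,d)‖^2 := by
      rw [hR, hρdef, trace_re]
    have hZnn : ∀ k : α × β, (0:ℝ) ≤ ∑ a : α, ∑ d : β, ‖B k (a,d)‖^2 :=
      fun k => Finset.sum_nonneg fun _ _ => Finset.sum_nonneg fun _ _ => sq_nonneg _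
    have hXnn : (0:ℝ) ≤ X := Finset.sum_nonneg fun _ _ =>
      Finset.sum_nonneg fun _ _ => sq_nonneg _
    constructor
    · rw [Complex.im_sum]
      exact Finset.sum_eq_zero fun k _ => (hpb k).1
    constructor
    · rw [Complex.re_sum, hXtot]
      calc -(X * R / 2)
          = ∑ k : α × β, -((X * (∑ a : α, ∑ d : β, ‖B k (a,d)‖^2))/2) := by
            rw [hRsum, Finset.mul_sum, Finset.sum_div, ← Finset.sum_neg_distrib]
        _ ≤ _ := Finset.sum_le_sum fun k _ => (hpb k).2.1
    · rw [Complex.re_sum, hXtot]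
      calc _ ≤ ∑ k : α × β, X * (∑ a : α, ∑ d : β, ‖B k (a,d)‖^2) :=
            Finset.sum_le_sum fun k _ => (hpb k).2.2
        _ = X * R := by rw [hRsum, ← Finset.mul_sum]
  -- scalar quadratic form
  have hscal : ∀ (r : ℝ) (x : α × β → ℂ),
      star x ⬝ᵥ (((r:ℂ) • (1 : Matrix (α × β) (α × β) ℂ)) *ᵥ x)
        = (r:ℂ) * (star x ⬝ᵥ x) := by
    intro r x
    rw [Matrix.smul_mulVec, Matrix.one_mulVec, dotProduct_smul]
    simp [smul_eq_mul]
  have hdotre : ∀ x : α × β → ℂ, (star x ⬝ᵥ x) = ((∑ p : α × β, ‖x p‖^2 : ℝ) : ℂ) := by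
    intro x
    simp only [dotProduct, Pi.star_apply, RCLike.star_def]
    rw [Complex.ofReal_sum]
    refine Finset.sum_congr rfl fun p _ => ?_
    rw [mul_comm, Complex.mul_conj]
    simp [Complex.sq_norm]
  constructor
  · refine .of_dotProduct_mulVec_nonneg ((hsmul R).sub hptB) fun x => ?_
    rw [Matrix.sub_mulVec, dotProduct_sub, hscal R x, hdotre x]
    rw [Complex.le_def]
    obtain ⟨him, hlow, hup⟩ := key x
    constructor
    · simp only [Complex.sub_re, Complex.zero_re, ← Complex.ofReal_mul]
      rw [Complex.ofReal_re]
      linarith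
    · simp only [Complex.sub_im, Complex.zero_im, ← Complex.ofReal_mul]
      rw [Complex.ofReal_im, him]
      ring
  · refine .of_dotProduct_mulVec_nonneg (hptB.add (hsmul (R/2))) fun x => ?_
    rw [Matrix.add_mulVec, dotProduct_add, hscal (R/2) x, hdotre x]
    rw [Complex.le_def]
    obtain ⟨him, hlow, hup⟩ := key x
    constructor
    · simp only [Complex.add_re, Complex.zero_re, ← Complex.ofReal_mul]
      rw [Complex.ofReal_re]
      linarith
    · simp only [Complex.add_im, Complex.zero_im, ← Complex.ofReal_mul]
      rw [Complex.ofReal_im, him]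
      ring
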